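/- If (u_i, v_i), i = 1,...,t, is a hooked Skolem sequence of order t, then the triples B_i = {0, i, v_i + t}, i = 1,...,t, form a (6t+1, 3, 1) cyclic difference family over Z_{6t+1}. -/

import Mathlib

/-- A hooked Skolem sequence of order `t`, as a collection of pairs `(u i, v i)`,
`1 ≤ i ≤ t`, with `v i - u i = i` whose entries partition `{1, ..., 2t+1} \ {2t}`. -/
def IsHookedSkolem (t : ℕ) (u v : ℕ → ℕ) : Prop :=
  (∀ i ∈ Finset.Icc 1 t, v i = u i + i) ∧
  (Finset.Icc 1 t).val.bind (fun i => ({u i, v i} : Multiset ℕ)) =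
    ((Finset.Icc 1 (2 * t + 1)).erase (2 * t)).val

/-- A `(v, k, 1)` cyclic difference family: `t` `k`-element subsets of `ZMod v` such that
every nonzero element of `ZMod v` occurs exactly once among the ordered differences of
distinct elements within the subsets. -/
def IsCDF (v k t : ℕ) (B : ℕ → Finset (ZMod v)) : Prop :=
  (∀ i ∈ Finset.Icc 1 t, (B i).card = k) ∧
  ∀ d : ZMod v, d ≠ 0 →
    (∑ i ∈ Finset.Icc 1 t,
      (((B i) ×ˢ (B i)).filter (fun p => p.1 ≠ p.2 ∧ p.1 - p.2 = d)).card) = 1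

private lemma multiset_map_sum {α β γ : Type*} [DecidableEq α] (s : Finset α)
    (g : α → Multiset β) (f : β → γ) :
    Multiset.map f (∑ i ∈ s, g i) = ∑ i ∈ s, Multiset.map f (g i) := by
  induction s using Finset.cons_induction with
  | empty => simp
  | cons a s ha ih => rw [Finset.sum_cons, Finset.sum_cons, Multiset.map_add, ih]

private lemma cval (s : Finset ℕ) (n : ℕ) : Multiset.count n s.val = if n ∈ s then 1 else 0 := by
  split_ifs with h
  · exact Multiset.count_eq_one_of_mem s.nodup h
  · exact Multiset.count_eq_zero_of_notMem h

private lemma count_map_addt (M : Multiset ℕ) (t n : ℕ) :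
    Multiset.count n (M.map (· + t)) = if t ≤ n then Multiset.count (n - t) M else 0 := by
  split_ifs with hle
  · obtain ⟨m, rfl⟩ : ∃ m, n = m + t := ⟨n - t, by omega⟩
    rw [Nat.add_sub_cancel]
    exact Multiset.count_map_eq_count' (· + t) M (fun a b hab => by
      simp only at hab; omega) m
  · rw [Multiset.count_eq_zero]
    intro hmem
    obtain ⟨x, -, hx⟩ := Multiset.mem_map.1 hmem
    omega

private lemma six_count (N : ℕ) (y z d : ZMod N) (hy : y ≠ 0) (hz : z ≠ 0) (hyz : y ≠ z) :
    ((({0,y,z} ×ˢ {0,y,z} : Finset (ZMod N × ZMod N)).filter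
        (fun p => p.1 ≠ p.2 ∧ p.1 - p.2 = d)).card)
      = Multiset.count d ((y ::ₘ (z-y) ::ₘ z ::ₘ 0) + ((-y) ::ₘ (-(z-y)) ::ₘ (-z) ::ₘ 0)) := by
  have h0 : (0:ZMod N) ∉ ({y, z} : Finset (ZMod N)) := by simp [Ne.symm hy, Ne.symm hz]
  have h1 : y ∉ ({z} : Finset (ZMod N)) := by simp [hyz]
  have hy' : (0:ZMod N) ≠ y := Ne.symm hy
  have hz' : (0:ZMod N) ≠ z := Ne.symm hz
  have hzy : z ≠ y := Ne.symm hyz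
  rw [Finset.card_filter, Finset.sum_product]
  simp only [show ({0,y,z} : Finset (ZMod N)) = insert 0 (insert y {z}) from rfl,
    Finset.sum_insert h0, Finset.sum_insert h1, Finset.sum_singleton]
  simp only [Multiset.count_add, Multiset.count_cons, Multiset.count_zero,
    ne_eq, not_true_eq_false, false_and, if_false,
    sub_zero, zero_sub, sub_self, hy', hz', hyz, hzy, hy, hz, not_false_eq_true, true_and]
  have e2 : y - z = -(z-y) := by ring
  rw [e2]
  simp only [eq_comm]
  ring

private lemma idA (t : ℕ) (ht : 1 ≤ t) :
    (Finset.Icc 1 t).val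
      + Multiset.map (· + t) (((Finset.Icc 1 (2*t+1)).erase (2*t)).val)
      = ((Finset.Icc 1 (3*t+1)).erase (3*t)).val := by
  ext n
  rw [Multiset.count_add, count_map_addt, cval, cval, cval]
  simp only [Finset.mem_erase, Finset.mem_Icc, ne_eq]
  split_ifs <;> omega

private lemma idC (t : ℕ) (ht : 1 ≤ t) :
    ((Finset.Icc 1 (3*t+1)).erase (3*t)).val + ((Finset.Icc (3*t) (6*t)).erase (3*t+1)).val
      = (Finset.Icc 1 (6*t)).val := by
  ext n
  rw [Multiset.count_add, cval, cval, cval]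
  simp only [Finset.mem_erase, Finset.mem_Icc]
  split_ifs <;> omega

private lemma idB (t : ℕ) :
    Multiset.map (fun n => 6*t+1-n) (((Finset.Icc 1 (3*t+1)).erase (3*t)).val)
      = ((Finset.Icc (3*t) (6*t)).erase (3*t+1)).val := by
  have himg : ((Finset.Icc 1 (3*t+1)).erase (3*t)).image (fun n => 6*t+1-n)
      = (Finset.Icc (3*t) (6*t)).erase (3*t+1) := by
    ext n
    simp only [Finset.mem_image, Finset.mem_erase, Finset.mem_Icc, ne_eq]
    constructor
    · rintro ⟨a, ha, rfl⟩; omega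
    · intro hn; exact ⟨6*t+1-n, by omega, by omega⟩
  have hinj : Set.InjOn (fun n => 6*t+1-n) ↑((Finset.Icc 1 (3*t+1)).erase (3*t)) := by
    intro a ha b hb hab
    simp only [Finset.coe_erase, Set.mem_diff, Finset.mem_coe, Finset.mem_Icc,
      Set.mem_singleton_iff] at ha hb
    simp only at hab
    omega
  rw [← himg, Finset.image_val_of_injOn hinj]

/-- If `(u i, v i)`, `i = 1, ..., t`, is a hooked Skolem sequence of order `t`, then the
triples `B i = {0, i, v i + t}` form a `(6t+1, 3, 1)` cyclic difference family. -/
theorem stmt_8 (t : ℕ) (u v : ℕ → ℕ) (h : IsHookedSkolem t u v) :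
    IsCDF (6 * t + 1) 3 t
      (fun i => ({0, (i : ZMod (6 * t + 1)), ((v i + t : ℕ) : ZMod (6 * t + 1))} :
        Finset (ZMod (6 * t + 1)))) := by
  obtain ⟨hvu, hpart⟩ := h
  haveI : NeZero (6*t+1) := ⟨by omega⟩
  have hinj : ∀ m n : ℕ, m < 6*t+1 → n < 6*t+1 → ((m : ZMod (6*t+1)) = n) → m = n := by
    intro m n hm hn hmn
    have := congrArg ZMod.val hmn
    rwa [ZMod.val_cast_of_lt hm, ZMod.val_cast_of_lt hn] at this
  have hbd : ∀ i, 1 ≤ i → i ≤ t → 1 ≤ u i ∧ u i ≤ 2*t+1 ∧ 1 ≤ v i ∧ v i ≤ 2*t+1 := by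
    intro i h1 h2
    have hu : u i ∈ ((Finset.Icc 1 (2*t+1)).erase (2*t)) := by
      rw [← Finset.mem_val, ← hpart]
      exact Multiset.mem_bind.2 ⟨i, Finset.mem_def.1 (Finset.mem_Icc.2 ⟨h1, h2⟩), by simp⟩
    have hv : v i ∈ ((Finset.Icc 1 (2*t+1)).erase (2*t)) := by
      rw [← Finset.mem_val, ← hpart]
      exact Multiset.mem_bind.2 ⟨i, Finset.mem_def.1 (Finset.mem_Icc.2 ⟨h1, h2⟩), by simp⟩
    simp only [Finset.mem_erase, Finset.mem_Icc] at hu hv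
    omega
  constructor
  · -- cardinality
    intro i hi
    simp only [Finset.mem_Icc] at hi
    obtain ⟨h1, h2⟩ := hi
    obtain ⟨hu1, hu2, hv1, hv2⟩ := hbd i h1 h2
    have hy : ((i:ℕ) : ZMod (6*t+1)) ≠ 0 := by
      intro he
      have : (i:ℕ) = 0 := hinj i 0 (by omega) (by omega) (by rw [Nat.cast_zero]; exact he)
      omega
    have hz : (((v i + t : ℕ)) : ZMod (6*t+1)) ≠ 0 := by
      intro he
      have : (v i + t : ℕ) = 0 := hinj _ 0 (by omega) (by omega) (by rw [Nat.cast_zero]; exact he)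
      omega
    have hyz : ((i:ℕ) : ZMod (6*t+1)) ≠ ((v i + t : ℕ) : ZMod (6*t+1)) := by
      intro he
      have := hinj i (v i + t) (by omega) (by omega) he
      omega
    simp only
    rw [Finset.card_insert_of_notMem (by
        simp only [Finset.mem_insert, Finset.mem_singleton]
        push_neg
        exact ⟨Ne.symm hy, Ne.symm hz⟩),
      Finset.card_insert_of_notMem (by
        simp only [Finset.mem_singleton]
        exact hyz),
      Finset.card_singleton]
  · -- difference count
    intro d hd
    rcases Nat.eq_zero_or_pos t with rfl | ht
    · exfalso
      apply hd
      haveI : Subsingleton (ZMod (6 * 0 + 1)) := by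
        norm_num
        infer_instance
      exact Subsingleton.elim d 0
    have key : ∀ i ∈ Finset.Icc 1 t,
        ((({0, ((i:ℕ) : ZMod (6*t+1)), ((v i + t : ℕ) : ZMod (6*t+1))} : Finset (ZMod (6*t+1))) ×ˢ
            ({0, ((i:ℕ) : ZMod (6*t+1)), ((v i + t : ℕ) : ZMod (6*t+1))} : Finset (ZMod (6*t+1)))).filter
            (fun p => p.1 ≠ p.2 ∧ p.1 - p.2 = d)).card
          = Multiset.count d
              (Multiset.map (fun n => ((n:ℕ) : ZMod (6*t+1))) (i ::ₘ (u i + t) ::ₘ (v i + t) ::ₘ 0)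
               + Multiset.map (fun n => -((n:ℕ) : ZMod (6*t+1))) (i ::ₘ (u i + t) ::ₘ (v i + t) ::ₘ 0)) := by
      intro i hi
      simp only [Finset.mem_Icc] at hi
      obtain ⟨h1, h2⟩ := hi
      obtain ⟨hu1, hu2, hv1, hv2⟩ := hbd i h1 h2
      have hy : ((i:ℕ) : ZMod (6*t+1)) ≠ 0 := by
        intro he
        have : (i:ℕ) = 0 := hinj i 0 (by omega) (by omega) (by rw [Nat.cast_zero]; exact he)
        omega
      have hz : (((v i + t : ℕ)) : ZMod (6*t+1)) ≠ 0 := by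
        intro he
        have : (v i + t : ℕ) = 0 := hinj _ 0 (by omega) (by omega) (by rw [Nat.cast_zero]; exact he)
        omega
      have hyz : ((i:ℕ) : ZMod (6*t+1)) ≠ ((v i + t : ℕ) : ZMod (6*t+1)) := by
        intro he
        have := hinj i (v i + t) (by omega) (by omega) he
        omega
      rw [six_count (6*t+1) _ _ d hy hz hyz]
      have hw : (((u i + t : ℕ)) : ZMod (6*t+1))
          = ((v i + t : ℕ) : ZMod (6*t+1)) - ((i:ℕ) : ZMod (6*t+1)) := by
        rw [eq_sub_iff_add_eq, ← Nat.cast_add,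
          show u i + t + i = v i + t by rw [hvu i (Finset.mem_Icc.2 ⟨h1, h2⟩)]; ring]
      rw [← hw]
      simp [Multiset.map_cons]
    rw [Finset.sum_congr rfl key, ← Multiset.count_sum']
    have hT : (∑ i ∈ Finset.Icc 1 t, ((i ::ₘ (u i + t) ::ₘ (v i + t) ::ₘ 0) : Multiset ℕ))
        = ((Finset.Icc 1 (3*t+1)).erase (3*t)).val := by
      have step1 : ∀ i : ℕ, ((i ::ₘ (u i + t) ::ₘ (v i + t) ::ₘ 0) : Multiset ℕ)
          = ({i} : Multiset ℕ) + Multiset.map (· + t) ({u i, v i} : Multiset ℕ) := by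
        intro i; rfl
      simp only [step1]
      rw [Finset.sum_add_distrib, Finset.sum_multiset_singleton,
        ← multiset_map_sum (Finset.Icc 1 t) (fun i => ({u i, v i} : Multiset ℕ)) (· + t)]
      have hb : (∑ i ∈ Finset.Icc 1 t, ({u i, v i} : Multiset ℕ))
          = (Finset.Icc 1 t).val.bind (fun i => ({u i, v i} : Multiset ℕ)) := by
        rw [Finset.sum_eq_multiset_sum]; rfl
      rw [hb, hpart]
      exact idA t ht
    have hsum : (∑ i ∈ Finset.Icc 1 t,
        (Multiset.map (fun n => ((n:ℕ) : ZMod (6*t+1))) (i ::ₘ (u i + t) ::ₘ (v i + t) ::ₘ 0)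
         + Multiset.map (fun n => -((n:ℕ) : ZMod (6*t+1))) (i ::ₘ (u i + t) ::ₘ (v i + t) ::ₘ 0)))
        = Multiset.map (fun n => ((n:ℕ) : ZMod (6*t+1))) ((Finset.Icc 1 (6*t)).val) := by
      rw [Finset.sum_add_distrib,
        ← multiset_map_sum (Finset.Icc 1 t)
          (fun i => ((i ::ₘ (u i + t) ::ₘ (v i + t) ::ₘ 0) : Multiset ℕ))
          (fun n => ((n:ℕ) : ZMod (6*t+1))),
        ← multiset_map_sum (Finset.Icc 1 t)
          (fun i => ((i ::ₘ (u i + t) ::ₘ (v i + t) ::ₘ 0) : Multiset ℕ))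
          (fun n => -((n:ℕ) : ZMod (6*t+1))),
        hT]
      have hneg : Multiset.map (fun n => -((n:ℕ) : ZMod (6*t+1)))
            (((Finset.Icc 1 (3*t+1)).erase (3*t)).val)
          = Multiset.map (fun n => ((n:ℕ) : ZMod (6*t+1)))
            (Multiset.map (fun n => 6*t+1-n) (((Finset.Icc 1 (3*t+1)).erase (3*t)).val)) := by
        rw [Multiset.map_map]
        refine Multiset.map_congr rfl ?_
        intro n hn
        have hn' : n ≤ 3*t+1 := by
          have := Finset.mem_Icc.1 (Finset.mem_of_mem_erase (Finset.mem_def.2 hn))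
          omega
        simp only [Function.comp_apply]
        rw [neg_eq_iff_add_eq_zero, ← Nat.cast_add,
          show n + (6*t+1-n) = 6*t+1 by omega, ZMod.natCast_self]
      rw [hneg, idB, ← Multiset.map_add, idC t ht]
    rw [hsum]
    -- final count
    have hdv1 : d.val ≠ 0 := fun h0 => hd ((ZMod.val_eq_zero d).1 h0)
    have hdv2 : d.val < 6*t+1 := ZMod.val_lt d
    have hmem : d ∈ Multiset.map (fun n => ((n:ℕ) : ZMod (6*t+1))) ((Finset.Icc 1 (6*t)).val) :=
      Multiset.mem_map.2 ⟨d.val, Finset.mem_def.1 (Finset.mem_Icc.2 ⟨by omega, by omega⟩),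
        ZMod.natCast_rightInverse d⟩
    have hnd : (Multiset.map (fun n => ((n:ℕ) : ZMod (6*t+1))) ((Finset.Icc 1 (6*t)).val)).Nodup := by
      refine Multiset.Nodup.map_on ?_ (Finset.Icc 1 (6*t)).nodup
      intro x hx y hy hxy
      have hx' := Finset.mem_Icc.1 (Finset.mem_def.2 hx)
      have hy' := Finset.mem_Icc.1 (Finset.mem_def.2 hy)
      exact hinj x y (by omega) (by omega) hxy
    exact Multiset.count_eq_one_of_mem hnd hmem
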